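/- Let B be a two-sided standard Brownian motion and let a > 0. There exist constants c > 0 and b > 0 such that for all y ≥ 1, P( sup_{0 ≤ z ≤ y} {B(z) + az} ≤ sup_{z ≤ 0} {B(z) + az} ) ≥ c·e^{−b·y}. -/

import Mathlib

open MeasureTheory ProbabilityTheory Filter Set

noncomputable section

/-- The increment conditions of a standard Brownian motion on the nonnegative half-line:
increments over `[s,t]` (for `0 ≤ s ≤ t`) are centered Gaussian with variance `t - s`,
and increments over disjoint consecutive intervals are jointly independent. -/
def HasStdBMIncrements {Ω : Type*} [MeasureSpace Ω] (X : Ω → ℝ → ℝ) : Prop :=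
  (∀ s t : ℝ, 0 ≤ s → s ≤ t →
      Measure.map (fun ω => X ω t - X ω s) (ℙ : Measure Ω)
        = gaussianReal 0 (Real.toNNReal (t - s))) ∧
  (∀ (n : ℕ) (ts : Fin (n + 1) → ℝ), Monotone ts → 0 ≤ ts 0 →
      iIndepFun
        (fun (i : Fin n) ω => X ω (ts i.succ) - X ω (ts i.castSucc)) (ℙ : Measure Ω))

/-- A two-sided standard Brownian motion: a.s. continuous paths, starts at `0`,
the processes `t ↦ W t` and `t ↦ W (-t)` on `[0,∞)` are standard Brownian motions,
and these two halves are independent. -/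
def IsTwoSidedStdBM {Ω : Type*} [MeasureSpace Ω] (W : Ω → ℝ → ℝ) : Prop :=
  (∀ᵐ ω ∂(ℙ : Measure Ω), Continuous (W ω)) ∧
  (∀ᵐ ω ∂(ℙ : Measure Ω), W ω 0 = 0) ∧
  HasStdBMIncrements W ∧
  HasStdBMIncrements (fun ω t => W ω (-t)) ∧
  IndepFun (fun ω => (fun t : {t : ℝ // 0 ≤ t} => W ω t))
    (fun ω => (fun t : {t : ℝ // 0 ≤ t} => W ω (-(t : ℝ)))) (ℙ : Measure Ω)

-- Auxiliary lemmas

open Real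
open scoped NNReal ENNReal

lemma iIndepFun_congr' {Ω ι : Type*} [MeasurableSpace Ω] {μ : Measure Ω} {β : ι → Type*}
    [m : ∀ i, MeasurableSpace (β i)] {f g : ∀ i, Ω → β i}
    (h : ∀ i, f i =ᵐ[μ] g i) (hf : iIndepFun f μ) : iIndepFun g μ := by
  rw [iIndepFun_iff_measure_inter_preimage_eq_mul] at hf ⊢
  intro S sets hmeas
  have h1 : ∀ i ∈ S, (g i ⁻¹' sets i : Set Ω) =ᵐ[μ] (f i ⁻¹' sets i : Set Ω) := by
    intro i _
    filter_upwards [h i] with ω hω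
    show (g i ω ∈ sets i) = (f i ω ∈ sets i)
    rw [hω]
  have h2 : ((⋂ i ∈ S, g i ⁻¹' sets i : Set Ω)) =ᵐ[μ] ((⋂ i ∈ S, f i ⁻¹' sets i : Set Ω)) := by
    have hall : ∀ᵐ ω ∂μ, ∀ i ∈ S, f i ω = g i ω := (S.eventually_all).2 (fun i _ => h i)
    filter_upwards [hall] with ω hω
    show (ω ∈ ⋂ i ∈ S, g i ⁻¹' sets i) = (ω ∈ ⋂ i ∈ S, f i ⁻¹' sets i)
    simp only [Set.mem_iInter, Set.mem_preimage, eq_iff_iff]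
    constructor <;> intro h' i hi
    · rw [hω i hi]; exact h' i hi
    · rw [← hω i hi]; exact h' i hi
  rw [measure_congr h2, hf S hmeas]
  exact Finset.prod_congr rfl (fun i hi => (measure_congr (h1 i hi)).symm)

lemma hasStdBM_congr {Ω : Type*} [MeasureSpace Ω] {X Y : Ω → ℝ → ℝ}
    (h : ∀ t, (fun ω => X ω t) =ᵐ[(ℙ : Measure Ω)] (fun ω => Y ω t))
    (hX : HasStdBMIncrements X) : HasStdBMIncrements Y := by
  constructor
  · intro s t hs hst
    rw [← hX.1 s t hs hst]
    apply Measure.map_congr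
    filter_upwards [h s, h t] with ω h1 h2
    rw [show Y ω t = X ω t from h2.symm, show Y ω s = X ω s from h1.symm]
  · intro n ts hts h0
    refine iIndepFun_congr' (fun i => ?_) (hX.2 n ts hts h0)
    filter_upwards [h (ts i.succ), h (ts i.castSucc)] with ω h1 h2
    show X ω (ts i.succ) - X ω (ts i.castSucc) = Y ω (ts i.succ) - Y ω (ts i.castSucc)
    rw [h1, h2]


lemma gauss_symm {v : ℝ≥0} (hv : v ≠ 0) : gaussianReal 0 v (Ici (0:ℝ)) = gaussianReal 0 v (Iic (0:ℝ)) := by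
  have hmap : (gaussianReal 0 v).map (fun x => (-1 : ℝ) * x) = gaussianReal 0 v := by
    rw [gaussianReal_map_const_mul (-1)]
    norm_num
  conv_lhs => rw [← hmap]
  rw [Measure.map_apply (by fun_prop) measurableSet_Ici]
  congr 1
  ext x
  simp only [Set.mem_preimage, Set.mem_Ici, Set.mem_Iic]
  constructor <;> intro h <;> nlinarith

lemma gauss_singleton {v : ℝ≥0} (hv : v ≠ 0) (x : ℝ) : gaussianReal 0 v {x} = 0 :=
  gaussianReal_absolutelyContinuous 0 hv (by simp)

lemma gauss_Ici_zero {v : ℝ≥0} (hv : v ≠ 0) : gaussianReal 0 v (Ici (0:ℝ)) = 2⁻¹ := by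
  have h1 : gaussianReal 0 v (Ici (0:ℝ)) + gaussianReal 0 v (Iic (0:ℝ))
      = gaussianReal 0 v (Ici (0:ℝ) ∪ Iic 0) + gaussianReal 0 v (Ici (0:ℝ) ∩ Iic 0) :=
    (measure_union_add_inter' measurableSet_Ici _).symm
  have h2 : (Ici (0:ℝ) ∪ Iic 0) = Set.univ := by
    ext x; simp [le_total 0 x, or_comm]
  have h3 : (Ici (0:ℝ) ∩ Iic 0) = {(0:ℝ)} := by
    rw [Set.Ici_inter_Iic, Set.Icc_self]
  rw [h2, h3, gauss_singleton hv, add_zero, measure_univ, ← gauss_symm hv] at h1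
  have h4 : 2 * gaussianReal 0 v (Ici (0:ℝ)) = 1 := by rw [two_mul]; exact h1
  calc gaussianReal 0 v (Ici (0:ℝ))
      = 2⁻¹ * (2 * gaussianReal 0 v (Ici (0:ℝ))) := by
        rw [← mul_assoc, ENNReal.inv_mul_cancel two_ne_zero ENNReal.ofNat_ne_top, one_mul]
    _ = 2⁻¹ := by rw [h4, mul_one]

lemma gauss_half (v : ℝ≥0) : (2 : ℝ≥0∞)⁻¹ ≤ gaussianReal 0 v (Ici (0:ℝ)) := by
  rcases eq_or_ne v 0 with rfl | hv
  · simp only [gaussianReal_zero_var]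
    rw [Measure.dirac_apply_of_mem (by simp : (0:ℝ) ∈ Ici 0)]
    exact ENNReal.inv_le_one.mpr one_le_two
  · rw [gauss_Ici_zero hv]

lemma gauss_interval_lb {v : ℝ≥0} (hv : v ≠ 0) {r : ℝ} (hr : 0 ≤ r) :
    ENNReal.ofReal ((Real.sqrt (2 * π * v))⁻¹ * Real.exp (-(r+1)^2 / (2*v)))
      ≤ gaussianReal 0 v (Ico r (r+1)) := by
  rw [gaussianReal_apply_eq_integral 0 hv]
  apply ENNReal.ofReal_le_ofReal
  have hvpos : (0:ℝ) < v := lt_of_le_of_ne (v.coe_nonneg) (by exact_mod_cast hv.symm)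
  have hint : ∀ x ∈ Ico r (r+1),
      (Real.sqrt (2 * π * v))⁻¹ * Real.exp (-(r+1)^2 / (2*v)) ≤ gaussianPDFReal 0 v x := by
    intro x hx
    unfold gaussianPDFReal
    apply mul_le_mul_of_nonneg_left _ (by positivity)
    apply Real.exp_le_exp.2
    rw [div_le_div_iff_of_pos_right (by positivity)]
    have hx0 : 0 ≤ x := le_trans hr hx.1
    nlinarith [hx.1, hx.2.le]
  calc (Real.sqrt (2 * π * v))⁻¹ * Real.exp (-(r+1)^2 / (2*v))
      = ∫ _ in Ico r (r+1), (Real.sqrt (2 * π * v))⁻¹ * Real.exp (-(r+1)^2 / (2*v)) := by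
        rw [setIntegral_const, Real.volume_real_Ico]
        simp
    _ ≤ ∫ x in Ico r (r+1), gaussianPDFReal 0 v x := by
        apply setIntegral_mono_on
        · exact integrableOn_const (by rw [Real.volume_Ico]; exact ENNReal.ofReal_ne_top)
        · exact (integrable_gaussianPDFReal 0 v).integrableOn
        · exact measurableSet_Ico
        · exact hint

lemma gauss_tail_lb {v : ℝ≥0} (hv : v ≠ 0) {r : ℝ} (hr : 0 ≤ r) :
    ENNReal.ofReal ((Real.sqrt (2 * π * v))⁻¹ * Real.exp (-(r+1)^2 / (2*v)))
      ≤ gaussianReal 0 v (Ici r) :=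
  le_trans (gauss_interval_lb hv hr) (measure_mono (fun x hx => hx.1))

lemma gauss_tail_ub {v : ℝ≥0} (hv : 1 ≤ (v:ℝ)) {r : ℝ} (hr : 0 < r) :
    gaussianReal 0 v (Ici r) ≤ ENNReal.ofReal ((2*v/r) * Real.exp (-r^2 / (2*v))) := by
  have hv0 : v ≠ 0 := by
    intro h; rw [h] at hv; norm_num at hv
  have hvpos : (0:ℝ) < v := by linarith
  set k : ℝ := r / (2*v) with hk
  have hkpos : 0 < k := by positivity
  rw [gaussianReal_apply_eq_integral 0 hv0]
  apply ENNReal.ofReal_le_ofReal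
  have hintexp : IntegrableOn (fun x => Real.exp (-k * x)) (Ici r) := by
    rw [integrableOn_Ici_iff_integrableOn_Ioi]
    exact exp_neg_integrableOn_Ioi r hkpos
  have hpt : ∀ x ∈ Ici r, gaussianPDFReal 0 v x ≤ Real.exp (-k * x) := by
    intro x hx
    have hx' : r ≤ x := hx
    have hx0 : 0 ≤ x := le_trans hr.le hx'
    unfold gaussianPDFReal
    have h1 : (Real.sqrt (2 * π * v))⁻¹ ≤ 1 := by
      rw [inv_le_one_iff₀]
      right
      rw [show (1:ℝ) = Real.sqrt 1 by simp]
      apply Real.sqrt_le_sqrt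
      nlinarith [Real.pi_gt_three]
    have h2 : Real.exp (- (x - 0)^2 / (2*v)) ≤ Real.exp (-k * x) := by
      apply Real.exp_le_exp.2
      rw [hk, neg_div, neg_mul, neg_le_neg_iff, div_mul_eq_mul_div,
        div_le_div_iff_of_pos_right (by positivity)]
      nlinarith
    calc (Real.sqrt (2 * π * v))⁻¹ * Real.exp (- (x - 0)^2 / (2*v))
        ≤ 1 * Real.exp (-k * x) := by
          apply mul_le_mul h1 h2 (by positivity) (by norm_num)
      _ = Real.exp (-k * x) := one_mul _
  calc ∫ x in Ici r, gaussianPDFReal 0 v x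
      ≤ ∫ x in Ici r, Real.exp (-k * x) := by
        apply setIntegral_mono_on (integrable_gaussianPDFReal 0 v).integrableOn hintexp
          measurableSet_Ici hpt
    _ = ∫ x in Ioi r, Real.exp (-(k * x)) := by
        rw [integral_Ici_eq_integral_Ioi]
        congr 1; ext x; ring_nf
    _ = k⁻¹ * Real.exp (-(k * r)) := by
        have := integral_comp_mul_left_Ioi (fun u => Real.exp (-u)) r hkpos
        simp only [smul_eq_mul] at this
        rw [this, integral_exp_neg_Ioi]
    _ = (2*v/r) * Real.exp (-r^2 / (2*v)) := by
        rw [hk]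
        rw [show (r / (2*(v:ℝ)))⁻¹ = 2*v/r by field_simp]
        congr 1
        field_simp

lemma levy_max {Ω : Type*} [MeasureSpace Ω] [IsProbabilityMeasure (ℙ : Measure Ω)]
    (X : ℕ → Ω → ℝ) (n : ℕ) (hmeas : ∀ i, Measurable (X i)) {x : ℝ} (hx : 0 < x)
    (hhalf : ∀ j, j < n → (2 : ℝ≥0∞)⁻¹ ≤ ℙ {ω | 0 ≤ ∑ i ∈ Finset.Ico j n, X i ω})
    (hindep : ∀ j, j < n → IndepFun (fun ω => (fun i : Fin j => X i ω))
        (fun ω => ∑ i ∈ Finset.Ico j n, X i ω) (ℙ : Measure Ω)) :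
    ℙ {ω | ∃ j ≤ n, x ≤ ∑ i ∈ Finset.range j, X i ω}
      ≤ 2 * ℙ {ω | x ≤ ∑ i ∈ Finset.range n, X i ω} := by
  set S : ℕ → Ω → ℝ := fun j ω => ∑ i ∈ Finset.range j, X i ω with hS
  have hSmeas : ∀ j, Measurable (S j) := fun j => Finset.measurable_sum _ (fun i _ => hmeas i)
  set A : ℕ → Set Ω := fun j => {ω | x ≤ S j ω ∧ ∀ k < j, S k ω < x} with hA
  have hAeq : ∀ j, A j = {ω | x ≤ S j ω} ∩ ⋂ k ∈ Finset.range j, {ω | S k ω < x} := by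
    intro j
    ext ω
    simp only [hA, Set.mem_setOf_eq, Set.mem_inter_iff, Set.mem_iInter, Finset.mem_range]
  have hAmeas : ∀ j, MeasurableSet (A j) := by
    intro j
    rw [hAeq]
    exact (measurableSet_le measurable_const (hSmeas j)).inter
      (MeasurableSet.biInter (Finset.range j).countable_toSet
        (fun k _ => measurableSet_lt (hSmeas k) measurable_const))
  have hAdisj : ∀ j j', j < j' → Disjoint (A j) (A j') := by
    intro j j' hjj'
    rw [Set.disjoint_left]
    rintro ω ⟨h1, _⟩ ⟨_, h2⟩
    exact absurd h1 (not_le.2 (h2 j hjj'))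
  set C : ℕ → Set Ω := fun j => {ω | 0 ≤ ∑ i ∈ Finset.Ico j n, X i ω} with hC
  have hCmeas : ∀ j, MeasurableSet (C j) :=
    fun j => measurableSet_le measurable_const (Finset.measurable_sum _ (fun i _ => hmeas i))
  have hcover : {ω | ∃ j ≤ n, x ≤ S j ω} ⊆ ⋃ j ∈ Finset.range (n+1), A j := by
    rintro ω ⟨j0, hj0n, hj0⟩
    have hex : ∃ j, x ≤ S j ω := ⟨j0, hj0⟩
    set j := Nat.find hex with hj
    have hjle : j ≤ j0 := Nat.find_le hj0
    refine Set.mem_biUnion (Finset.mem_range.2 (Nat.lt_succ_of_le (le_trans hjle hj0n))) ?_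
    refine ⟨Nat.find_spec hex, fun k hk => ?_⟩
    exact not_le.1 (Nat.find_min hex hk)
  have hkey : ∀ j ≤ n, ℙ (A j) ≤ 2 * ℙ (A j ∩ C j) := by
    intro j hjn
    rcases eq_or_lt_of_le hjn with rfl | hjlt
    · have : C j = Set.univ := by
        ext ω
        simp [hC, Finset.Ico_self]
      rw [this, Set.inter_univ]
      exact le_mul_of_one_le_left zero_le one_le_two
    · -- independence case
      set q : (Fin j → ℝ) → ℕ → ℝ :=
        fun v k => ∑ i ∈ Finset.range k, (if h : i < j then v ⟨i, h⟩ else 0) with hqdef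
      have hqmeas : ∀ k, Measurable (fun v => q v k) := by
        intro k
        apply Finset.measurable_sum
        intro i _
        by_cases h : i < j
        · simp only [dif_pos h]
          exact measurable_pi_apply _
        · simp only [dif_neg h]
          exact measurable_const
      set MA : Set (Fin j → ℝ) := {v | x ≤ q v j ∧ ∀ k < j, q v k < x} with hMA
      have hMAmeas : MeasurableSet MA := by
        have : MA = {v | x ≤ q v j} ∩ ⋂ k ∈ Finset.range j, {v | q v k < x} := by
          ext v
          simp only [hMA, Set.mem_setOf_eq, Set.mem_inter_iff, Set.mem_iInter, Finset.mem_range]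
        rw [this]
        exact (measurableSet_le measurable_const (hqmeas j)).inter
          (MeasurableSet.biInter (Finset.range j).countable_toSet
            (fun k _ => measurableSet_lt (hqmeas k) measurable_const))
      have hq : ∀ (ω : Ω) (k : ℕ), k ≤ j → q (fun i : Fin j => X i ω) k = S k ω := by
        intro ω k hk
        apply Finset.sum_congr rfl
        intro i hi
        rw [dif_pos (lt_of_lt_of_le (Finset.mem_range.1 hi) hk)]
      have hpre : A j = (fun ω => (fun i : Fin j => X i ω)) ⁻¹' MA := by
        ext ω
        simp only [hA, Set.mem_setOf_eq, Set.mem_preimage, hMA]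
        constructor
        · rintro ⟨h1, h2⟩
          exact ⟨by rw [hq ω j le_rfl]; exact h1, fun k hk => by rw [hq ω k hk.le]; exact h2 k hk⟩
        · rintro ⟨h1, h2⟩
          rw [hq ω j le_rfl] at h1
          refine ⟨h1, fun k hk => ?_⟩
          have := h2 k hk
          rwa [hq ω k hk.le] at this
      have hCpre : C j = (fun ω => ∑ i ∈ Finset.Ico j n, X i ω) ⁻¹' (Ici 0) := rfl
      have hprod : ℙ (A j ∩ C j) = ℙ (A j) * ℙ (C j) := by
        rw [hpre, hCpre]
        exact (hindep j hjlt).measure_inter_preimage_eq_mul MA (Ici 0) hMAmeas measurableSet_Ici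
      calc ℙ (A j) = ℙ (A j) * 1 := (mul_one _).symm
        _ = ℙ (A j) * (2 * 2⁻¹) := by
            rw [ENNReal.mul_inv_cancel two_ne_zero ENNReal.ofNat_ne_top]
        _ ≤ ℙ (A j) * (2 * ℙ (C j)) := by
            exact mul_le_mul_right (mul_le_mul_right (hhalf j hjlt) 2) _
        _ = 2 * (ℙ (A j) * ℙ (C j)) := by ring
        _ = 2 * ℙ (A j ∩ C j) := by rw [hprod]
  have hsub2 : (⋃ j ∈ Finset.range (n+1), A j ∩ C j) ⊆ {ω | x ≤ S n ω} := by
    intro ω hω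
    rcases Set.mem_iUnion₂.1 hω with ⟨j, hj, hωj⟩
    have hjn : j ≤ n := Nat.lt_succ_iff.1 (Finset.mem_range.1 hj)
    have hsum : S j ω + ∑ i ∈ Finset.Ico j n, X i ω = S n ω :=
      Finset.sum_range_add_sum_Ico _ hjn
    have : x ≤ S j ω + ∑ i ∈ Finset.Ico j n, X i ω :=
      le_add_of_le_of_nonneg hωj.1.1 hωj.2
    rwa [hsum] at this
  calc ℙ {ω | ∃ j ≤ n, x ≤ S j ω}
      ≤ ℙ (⋃ j ∈ Finset.range (n+1), A j) := measure_mono hcover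
    _ ≤ ∑ j ∈ Finset.range (n+1), ℙ (A j) := measure_biUnion_finset_le _ _
    _ ≤ ∑ j ∈ Finset.range (n+1), 2 * ℙ (A j ∩ C j) := by
        apply Finset.sum_le_sum
        intro j hj
        exact hkey j (Nat.lt_succ_iff.1 (Finset.mem_range.1 hj))
    _ = 2 * ∑ j ∈ Finset.range (n+1), ℙ (A j ∩ C j) := by rw [Finset.mul_sum]
    _ = 2 * ℙ (⋃ j ∈ Finset.range (n+1), A j ∩ C j) := by
        rw [measure_biUnion_finset]
        · intro j hj j' hj' hjj'
          rcases lt_or_gt_of_ne hjj' with h | h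
          · exact Disjoint.mono inf_le_left inf_le_left (hAdisj j j' h)
          · exact (Disjoint.mono inf_le_left inf_le_left (hAdisj j' j h)).symm
        · exact fun j _ => (hAmeas j).inter (hCmeas j)
    _ ≤ 2 * ℙ {ω | x ≤ S n ω} := mul_le_mul_right (measure_mono hsub2) 2

lemma countable_max_bound {Ω : Type*} [MeasureSpace Ω] [IsProbabilityMeasure (ℙ : Measure Ω)]
    (φ : ℝ → Ω → ℝ) (hφ : HasStdBMIncrements (fun ω t => φ t ω))
    (hm : ∀ t, Measurable (φ t)) {s T x : ℝ} (hs : 0 ≤ s) (hsT : s ≤ T) (hx : 0 < x)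
    {Q : Set ℝ} (hQ : Q.Countable) (hQsub : Q ⊆ Icc s T) :
    ℙ {ω | ∃ q ∈ Q, x ≤ φ q ω - φ s ω} ≤ 2 * gaussianReal 0 (T - s).toNNReal (Ici x) := by
  rcases Q.eq_empty_or_nonempty with rfl | hQne
  · simp
  obtain ⟨e, hrange⟩ := hQ.exists_eq_range hQne
  set U : ℕ → Set Ω := fun m => {ω | ∃ i < m, x ≤ φ (e i) ω - φ s ω} with hU
  have hUnion : {ω | ∃ q ∈ Q, x ≤ φ q ω - φ s ω} = ⋃ m, U m := by
    ext ω
    simp only [hrange, Set.mem_setOf_eq, Set.mem_iUnion, hU, Set.mem_range]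
    constructor
    · rintro ⟨q, ⟨i, rfl⟩, hq⟩
      exact ⟨i + 1, i, Nat.lt_succ_self i, hq⟩
    · rintro ⟨m, i, _, hq⟩
      exact ⟨e i, ⟨i, rfl⟩, hq⟩
  have hUdir : Directed (· ⊆ ·) U := by
    apply Monotone.directed_le
    intro m m' hmm' ω
    rintro ⟨i, him, hi⟩
    exact ⟨i, lt_of_lt_of_le him hmm', hi⟩
  rw [hUnion, Directed.measure_iUnion hUdir]
  apply iSup_le
  intro m
  -- finite set of times
  classical
  set F : Finset ℝ := insert s (insert T ((Finset.range m).image e)) with hF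
  have hFs : s ∈ F := Finset.mem_insert_self _ _
  have hFT : T ∈ F := Finset.mem_insert_of_mem (Finset.mem_insert_self _ _)
  have hFsub : ∀ r ∈ F, r ∈ Icc s T := by
    intro r hr
    rcases Finset.mem_insert.1 hr with rfl | hr
    · exact ⟨le_rfl, hsT⟩
    rcases Finset.mem_insert.1 hr with rfl | hr
    · exact ⟨hsT, le_rfl⟩
    rcases Finset.mem_image.1 hr with ⟨i, _, rfl⟩
    exact hQsub (hrange ▸ Set.mem_range_self i)
  set c : ℕ := F.card with hc
  have hcpos : 0 < c := Finset.card_pos.2 ⟨s, hFs⟩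
  set n : ℕ := c - 1 with hn
  have hnc : n < c := Nat.pred_lt hcpos.ne'
  set iso := F.orderIsoOfFin (rfl : F.card = c) with hiso
  have hidx : ∀ i : ℕ, min i n < c := fun i => lt_of_le_of_lt (min_le_right _ _) hnc
  set idx : ℕ → Fin c := fun i => ⟨min i n, hidx i⟩ with hidx'
  set t : ℕ → ℝ := fun i => ↑(iso (idx i)) with ht
  have htmem : ∀ i, t i ∈ F := fun i => (iso _).2
  have htmono : Monotone t := by
    intro i i' hii'
    exact Subtype.coe_le_coe.2 (iso.monotone (Fin.le_def.2 (min_le_min_right _ hii')))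
  have hts : t 0 = s := by
    apply le_antisymm
    · have h1 : iso (idx 0) ≤ iso (iso.symm ⟨s, hFs⟩) :=
        iso.monotone (by simp [hidx', Fin.le_def])
      rw [OrderIso.apply_symm_apply] at h1
      exact h1
    · exact (hFsub _ (htmem 0)).1
  have htT : t n = T := by
    apply le_antisymm
    · exact (hFsub _ (htmem n)).2
    · have h1 : iso (iso.symm ⟨T, hFT⟩) ≤ iso (idx n) := by
        apply iso.monotone
        simp only [hidx', Fin.le_def, min_self]
        exact Nat.le_pred_of_lt (iso.symm ⟨T, hFT⟩).isLt
      rw [OrderIso.apply_symm_apply] at h1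
      exact h1
  have ht0 : ∀ i, 0 ≤ t i := fun i => le_trans (hs.trans (hts ▸ le_rfl)) (htmono (Nat.zero_le i))
  set X : ℕ → Ω → ℝ := fun i ω => φ (t (i+1)) ω - φ (t i) ω with hX
  have hXmeas : ∀ i, Measurable (X i) := fun i => (hm _).sub (hm _)
  have htel : ∀ (j : ℕ) (ω : Ω), ∑ i ∈ Finset.range j, X i ω = φ (t j) ω - φ (t 0) ω :=
    fun j ω => Finset.sum_range_sub (fun i => φ (t i) ω) j
  have htail : ∀ (j : ℕ), j ≤ n → ∀ (ω : Ω),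
      ∑ i ∈ Finset.Ico j n, X i ω = φ (t n) ω - φ (t j) ω := by
    intro j hj ω
    have h1 : ∑ i ∈ Finset.range j, X i ω + ∑ i ∈ Finset.Ico j n, X i ω
        = ∑ i ∈ Finset.range n, X i ω := Finset.sum_range_add_sum_Ico _ hj
    rw [htel j ω, htel n ω] at h1
    linarith
  have hlaw : ∀ u u' : ℕ, u ≤ u' →
      Measure.map (fun ω => φ (t u') ω - φ (t u) ω) (ℙ : Measure Ω)
        = gaussianReal 0 (t u' - t u).toNNReal :=
    fun u u' h => hφ.1 (t u) (t u') (ht0 u) (htmono h)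
  have hhalf : ∀ j, j < n → (2 : ℝ≥0∞)⁻¹ ≤ ℙ {ω | 0 ≤ ∑ i ∈ Finset.Ico j n, X i ω} := by
    intro j hj
    have hset : {ω | 0 ≤ ∑ i ∈ Finset.Ico j n, X i ω}
        = (fun ω => φ (t n) ω - φ (t j) ω) ⁻¹' (Ici 0) := by
      ext ω
      simp only [Set.mem_setOf_eq, Set.mem_preimage, Set.mem_Ici, htail j hj.le ω]
    rw [hset, ← Measure.map_apply (show Measurable (fun ω => φ (t n) ω - φ (t j) ω) from (hm _).sub (hm _)) measurableSet_Ici, hlaw j n hj.le]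
    exact gauss_half _
  have hindep : ∀ j, j < n → IndepFun (fun ω => (fun i : Fin j => X i ω))
      (fun ω => ∑ i ∈ Finset.Ico j n, X i ω) (ℙ : Measure Ω) := by
    intro j hj
    set u : Fin (j+2) → ℝ := fun k => if (k:ℕ) ≤ j then t k else t n with hu
    have humono : Monotone u := by
      intro k k' hkk'
      simp only [hu]
      by_cases h1 : (k:ℕ) ≤ j
      · by_cases h2 : (k':ℕ) ≤ j
        · rw [if_pos h1, if_pos h2]; exact htmono hkk'
        · rw [if_pos h1, if_neg h2]
          exact htmono (le_trans h1 (le_of_lt hj))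
      · have h2 : ¬ (k':ℕ) ≤ j := fun h => h1 (le_trans hkk' h)
        rw [if_neg h1, if_neg h2]
    have hu0 : 0 ≤ u 0 := by
      simp only [hu]
      rw [if_pos (by simp)]
      exact ht0 _
    have iY := hφ.2 (j+1) u humono hu0
    set Y : Fin (j+1) → Ω → ℝ :=
      fun i ω => φ (u i.succ) ω - φ (u i.castSucc) ω with hY
    have hYmeas : ∀ i, Measurable (Y i) := fun i => (hm _).sub (hm _)
    have iY' : iIndepFun Y
        (ℙ : Measure Ω) := iY
    set SS : Finset (Fin (j+1)) := Finset.univ.filter (fun i => (i:ℕ) < j) with hSS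
    set TT : Finset (Fin (j+1)) := {Fin.last j} with hTT
    have hdisj : Disjoint SS TT := by
      rw [Finset.disjoint_singleton_right, hSS, Finset.mem_filter]
      push_neg
      intro _
      simp [Fin.last]
    have base := iY'.indepFun_finset SS TT hdisj hYmeas
    have hmemSS : ∀ i : Fin j, (⟨i.1, Nat.lt_succ_of_lt i.isLt⟩ : Fin (j+1)) ∈ SS := by
      intro i
      simp [hSS, i.isLt]
    set φL : (SS → ℝ) → (Fin j → ℝ) :=
      fun v i => v ⟨⟨i.1, Nat.lt_succ_of_lt i.isLt⟩, hmemSS i⟩ with hφL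
    have hφLmeas : Measurable φL :=
      measurable_pi_lambda _ (fun i => measurable_pi_apply _)
    set ψ : (TT → ℝ) → ℝ := fun v => v ⟨Fin.last j, Finset.mem_singleton_self _⟩ with hψ
    have hψmeas : Measurable ψ := measurable_pi_apply _
    have res := base.comp hφLmeas hψmeas
    have hl : (φL ∘ fun a (i : SS) => Y i a) = (fun ω => (fun i : Fin j => X i ω)) := by
      funext ω i
      simp only [Function.comp_apply, hφL, hY, hX]
      have h1 : ((⟨i.1, Nat.lt_succ_of_lt i.isLt⟩ : Fin (j+1)).succ : ℕ) = i.1 + 1 := rfl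
      have h2 : (((⟨i.1, Nat.lt_succ_of_lt i.isLt⟩ : Fin (j+1)).castSucc) : ℕ) = i.1 := rfl
      have e1 : u (⟨i.1, Nat.lt_succ_of_lt i.isLt⟩ : Fin (j+1)).succ = t (i.1+1) := by
        simp only [hu, h1]
        rw [if_pos (Nat.succ_le_of_lt i.isLt)]
      have e2 : u ((⟨i.1, Nat.lt_succ_of_lt i.isLt⟩ : Fin (j+1)).castSucc) = t i.1 := by
        simp only [hu, h2]
        rw [if_pos (le_of_lt i.isLt)]
      rw [e1, e2]
    have hr : (ψ ∘ fun a (i : TT) => Y i a) = (fun ω => ∑ i ∈ Finset.Ico j n, X i ω) := by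
      funext ω
      simp only [Function.comp_apply, hψ, hY]
      have h1 : ((Fin.last j).succ : ℕ) = j + 1 := rfl
      have h2 : (((Fin.last j).castSucc) : ℕ) = j := rfl
      have e1 : u (Fin.last j).succ = t n := by
        simp only [hu, h1]
        rw [if_neg (by omega)]
      have e2 : u ((Fin.last j).castSucc) = t j := by
        simp only [hu, h2]
        rw [if_pos le_rfl]
      rw [e1, e2, htail j hj.le ω]
    rw [hl, hr] at res
    exact res
  have hlevy := levy_max X n hXmeas hx hhalf hindep
  have hUsub : U m ⊆ {ω | ∃ j ≤ n, x ≤ ∑ i ∈ Finset.range j, X i ω} := by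
    rintro ω ⟨i, him, hi⟩
    have hmem : e i ∈ F := by
      apply Finset.mem_insert_of_mem
      apply Finset.mem_insert_of_mem
      exact Finset.mem_image_of_mem e (Finset.mem_range.2 him)
    set k : Fin c := iso.symm ⟨e i, hmem⟩ with hk
    refine ⟨k.1, Nat.le_pred_of_lt k.isLt, ?_⟩
    have htk : t k.1 = e i := by
      have hkk : idx k.1 = k := by
        rw [hidx']
        ext
        simp only
        exact min_eq_left (Nat.le_pred_of_lt k.isLt)
      rw [ht]
      simp only
      rw [hkk, hk, OrderIso.apply_symm_apply]
    rw [htel k.1 ω, htk, hts]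
    exact hi
  have hlast : ℙ {ω | x ≤ ∑ i ∈ Finset.range n, X i ω}
      = gaussianReal 0 (T - s).toNNReal (Ici x) := by
    have hset : {ω | x ≤ ∑ i ∈ Finset.range n, X i ω}
        = (fun ω => φ (t n) ω - φ (t 0) ω) ⁻¹' (Ici x) := by
      ext ω
      simp only [Set.mem_setOf_eq, Set.mem_preimage, Set.mem_Ici, htel n ω]
    rw [hset, ← Measure.map_apply (show Measurable (fun ω => φ (t n) ω - φ (t 0) ω) from (hm _).sub (hm _)) measurableSet_Ici, hlaw 0 n (Nat.zero_le n),
      hts, htT]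
  calc ℙ (U m) ≤ ℙ {ω | ∃ j ≤ n, x ≤ ∑ i ∈ Finset.range j, X i ω} := measure_mono hUsub
    _ ≤ 2 * ℙ {ω | x ≤ ∑ i ∈ Finset.range n, X i ω} := hlevy
    _ = 2 * gaussianReal 0 (T - s).toNNReal (Ici x) := by rw [hlast]

lemma sqrt_inv_ge_exp_neg {y : ℝ} (hy : 1 ≤ y) : Real.exp (-y) ≤ (Real.sqrt y)⁻¹ := by
  have h1 : Real.sqrt y ≤ y := by
    have hy0 : (0:ℝ) ≤ y := by linarith
    nlinarith [Real.sq_sqrt hy0, Real.sqrt_nonneg y]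
  have h2 : y < Real.exp y := by
    have := Real.add_one_le_exp y
    linarith
  have h3 : Real.sqrt y ≤ Real.exp y := le_trans h1 h2.le
  rw [Real.exp_neg]
  exact inv_anti₀ (Real.sqrt_pos.2 (by linarith)) h3

lemma sqrt2piy_inv {y : ℝ} (hy : 1 ≤ y) :
    (Real.sqrt (2*π))⁻¹ * Real.exp (-y) ≤ (Real.sqrt (2*π*y))⁻¹ := by
  have hpi : (0:ℝ) < 2*π := by positivity
  rw [show 2*π*y = (2*π)*y by ring, Real.sqrt_mul hpi.le, mul_inv]
  exact mul_le_mul_of_nonneg_left (sqrt_inv_ge_exp_neg hy) (by positivity)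

lemma real_bound_1 {y : ℝ} (hy : 1 ≤ y) :
    ((Real.sqrt (2*π))⁻¹ * Real.exp (-1/2)) * Real.exp (-(1:ℝ)*y)
      ≤ (Real.sqrt (2*π*y))⁻¹ * Real.exp (-(0+1)^2/(2*y)) := by
  have h1 := sqrt2piy_inv hy
  have h2 : Real.exp (-1/2) ≤ Real.exp (-(0+1)^2/(2*y)) := by
    apply Real.exp_le_exp.2
    rw [div_le_div_iff₀ (by norm_num) (by linarith)]
    nlinarith
  calc ((Real.sqrt (2*π))⁻¹ * Real.exp (-1/2)) * Real.exp (-(1:ℝ)*y)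
      = ((Real.sqrt (2*π))⁻¹ * Real.exp (-y)) * Real.exp (-1/2) := by
        rw [neg_one_mul]; ring
    _ ≤ (Real.sqrt (2*π*y))⁻¹ * Real.exp (-(0+1)^2/(2*y)) := by
        apply mul_le_mul h1 h2 (by positivity) (by positivity)

lemma real_bound_2 {y a : ℝ} (hy : 1 ≤ y) (ha : 0 < a) :
    (Real.sqrt (2*π))⁻¹ * Real.exp (-(1 + (2*a+2)^2/2) * y)
      ≤ (Real.sqrt (2*π*y))⁻¹ * Real.exp (-(2*a*y+1+1)^2/(2*y)) := by
  have h1 := sqrt2piy_inv hy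
  have h2 : Real.exp (-((2*a+2)^2/2) * y) ≤ Real.exp (-(2*a*y+1+1)^2/(2*y)) := by
    apply Real.exp_le_exp.2
    have hkey : (2*a*y+1+1)^2/(2*y) ≤ (2*a+2)^2/2 * y := by
      rw [div_le_iff₀ (by linarith : (0:ℝ) < 2*y)]
      nlinarith [sq_nonneg (2*a+2), sq_nonneg y, sq_nonneg (y-1)]
    rw [show -((2*a+2)^2/2) * y = -((2*a+2)^2/2*y) by ring,
      show -(2*a*y+1+1)^2/(2*y) = -((2*a*y+1+1)^2/(2*y)) by ring]
    exact neg_le_neg hkey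
  calc (Real.sqrt (2*π))⁻¹ * Real.exp (-(1 + (2*a+2)^2/2) * y)
      = ((Real.sqrt (2*π))⁻¹ * Real.exp (-y)) * Real.exp (-((2*a+2)^2/2) * y) := by
        rw [mul_assoc, ← Real.exp_add]
        congr 2
        ring
    _ ≤ (Real.sqrt (2*π*y))⁻¹ * Real.exp (-(2*a*y+1+1)^2/(2*y)) := by
        apply mul_le_mul h1 h2 (by positivity) (by positivity)

lemma bddAbove_ae {Ω : Type*} [MeasureSpace Ω] [IsProbabilityMeasure (ℙ : Measure Ω)]
    (B : Ω → ℝ → ℝ) (k : ℝ → Ω → ℝ) (hkmeas : ∀ t, Measurable (k t))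
    (hkae : ∀ t, (fun ω => B ω t) =ᵐ[(ℙ : Measure Ω)] k t)
    (hneg' : HasStdBMIncrements (fun ω t => k (-t) ω))
    (hcont : ∀ᵐ ω ∂(ℙ : Measure Ω), Continuous (B ω))
    (hzero : ∀ᵐ ω ∂(ℙ : Measure Ω), B ω 0 = 0)
    {a : ℝ} (ha : 0 < a) :
    ∀ᵐ ω ∂(ℙ : Measure Ω), BddAbove ((fun z => B ω z + a * z) '' Iic 0) := by
  set φ : ℝ → Ω → ℝ := fun t => k (-t) with hφdef
  have hφmeas : ∀ t, Measurable (φ t) := fun t => hkmeas (-t)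
  set QQ : ℕ → Set ℝ := fun n => {r : ℝ | (∃ p : ℚ, (p:ℝ) = r) ∧ r ∈ Icc (n:ℝ) (n+1)} with hQQ
  have hQQc : ∀ n, (QQ n).Countable := by
    intro n
    apply Set.Countable.mono (fun r hr => hr.1) (Set.countable_range ((↑) : ℚ → ℝ))
  set s1 : ℕ → Set Ω := fun n => {ω | a*n/2 ≤ φ n ω - φ 0 ω} with hs1def
  set s2 : ℕ → Set Ω := fun n => {ω | ∃ q ∈ QQ n, a*n/2 ≤ φ q ω - φ (n:ℝ) ω} with hs2def
  set ρ : ℝ := Real.exp (-(a^2/8)) with hρ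
  have hρ1 : ρ < 1 := by
    rw [hρ, show (1:ℝ) = Real.exp 0 by simp]
    apply Real.exp_lt_exp.2
    have : 0 < a^2/8 := by positivity
    linarith
  have hρ0 : 0 ≤ ρ := Real.exp_nonneg _
  have hs1bound : ∀ n : ℕ, 1 ≤ n → ℙ (s1 n) ≤ ENNReal.ofReal ((4/a) * ρ^n) := by
    intro n hn
    have hn' : (1:ℝ) ≤ n := by exact_mod_cast hn
    have hlaw : Measure.map (fun ω => φ (n:ℝ) ω - φ 0 ω) (ℙ : Measure Ω)
        = gaussianReal 0 ((n:ℝ) - 0).toNNReal := hneg'.1 0 n le_rfl (Nat.cast_nonneg n)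
    have hset : s1 n = (fun ω => φ (n:ℝ) ω - φ 0 ω) ⁻¹' (Ici (a*n/2)) := rfl
    rw [hset, ← Measure.map_apply (show Measurable (fun ω => φ (n:ℝ) ω - φ 0 ω) from (hφmeas _).sub (hφmeas _)) measurableSet_Ici, hlaw]
    have hv : (1:ℝ) ≤ (((n:ℝ) - 0).toNNReal : ℝ) := by
      rw [Real.coe_toNNReal _ (by linarith)]
      linarith
    have hr : (0:ℝ) < a*n/2 := by positivity
    refine le_trans (gauss_tail_ub hv hr) (ENNReal.ofReal_le_ofReal (le_of_eq ?_))
    rw [Real.coe_toNNReal _ (by linarith)]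
    rw [hρ, ← Real.exp_nat_mul]
    have hne : (n:ℝ) ≠ 0 := by linarith
    congr 1
    · field_simp
      ring
    · congr 1
      field_simp
      ring
  have hs2bound : ∀ n : ℕ, 1 ≤ n → ℙ (s2 n) ≤ ENNReal.ofReal ((8/a) * ρ^n) := by
    intro n hn
    have hn' : (1:ℝ) ≤ n := by exact_mod_cast hn
    have hr : (0:ℝ) < a*n/2 := by positivity
    have hQsub : QQ n ⊆ Icc (n:ℝ) ((n:ℝ)+1) := fun r hr => hr.2
    have hcmb := countable_max_bound φ hneg' hφmeas (Nat.cast_nonneg n)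
      (by linarith : (n:ℝ) ≤ (n:ℝ)+1) hr (hQQc n) hQsub
    have h1 : ((n:ℝ) + 1 - (n:ℝ)).toNNReal = 1 := by
      rw [show (n:ℝ) + 1 - (n:ℝ) = 1 by ring, Real.toNNReal_one]
    rw [h1] at hcmb
    refine le_trans hcmb ?_
    have hgub := gauss_tail_ub (v := 1) (by norm_num) hr
    calc 2 * gaussianReal 0 1 (Ici (a*n/2))
        ≤ 2 * ENNReal.ofReal ((2*(1:ℝ≥0)/(a*n/2)) * Real.exp (-(a*n/2)^2 / (2*(1:ℝ≥0)))) :=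
          mul_le_mul_right hgub 2
      _ ≤ ENNReal.ofReal ((8/a) * ρ^n) := by
          rw [← ENNReal.ofReal_ofNat 2, ← ENNReal.ofReal_mul (by norm_num)]
          apply ENNReal.ofReal_le_ofReal
          rw [NNReal.coe_one, hρ, ← Real.exp_nat_mul]
          have h8 : 2 * (2*(1:ℝ)/(a*↑n/2) * Real.exp (-(a*↑n/2)^2 / (2*(1:ℝ))))
              = (8/(a*↑n)) * Real.exp (-(a*↑n/2)^2 / 2) := by
            field_simp
            ring
          rw [h8]
          apply mul_le_mul
          · rw [div_le_div_iff₀ (by positivity) (by positivity)]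
            nlinarith
          · apply Real.exp_le_exp.2
            have h2 : (n:ℝ) * -(a^2/8) = -(a^2*n/8) := by ring
            rw [h2]
            have h3 : -(a*↑n/2)^2/2 = -(a^2*n^2/8) := by ring
            rw [h3]
            nlinarith [sq_nonneg a]
          · positivity
          · positivity
  set SB : ℕ → Set Ω := fun m => s1 (m+1) ∪ s2 (m+1) with hSB
  have hSBb : ∀ m : ℕ, ℙ (SB m) ≤ ENNReal.ofReal (12/a) * (ENNReal.ofReal ρ)^(m+1) := by
    intro m
    calc ℙ (SB m) ≤ ℙ (s1 (m+1)) + ℙ (s2 (m+1)) := measure_union_le _ _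
      _ ≤ ENNReal.ofReal ((4/a) * ρ^(m+1)) + ENNReal.ofReal ((8/a) * ρ^(m+1)) :=
          add_le_add (hs1bound (m+1) (Nat.le_add_left 1 m)) (hs2bound (m+1) (Nat.le_add_left 1 m))
      _ = ENNReal.ofReal ((12/a) * ρ^(m+1)) := by
          rw [← ENNReal.ofReal_add (by positivity) (by positivity)]
          congr 1
          ring
      _ = ENNReal.ofReal (12/a) * (ENNReal.ofReal ρ)^(m+1) := by
          rw [ENNReal.ofReal_mul (by positivity), ENNReal.ofReal_pow hρ0]
  have htsum : ∑' m, ℙ (SB m) ≠ ⊤ := by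
    have hb : ∑' m, ℙ (SB m) ≤ ENNReal.ofReal (12/a) * ∑' m : ℕ, (ENNReal.ofReal ρ)^m := by
      rw [← ENNReal.tsum_mul_left]
      apply ENNReal.tsum_le_tsum
      intro m
      refine le_trans (hSBb m) ?_
      apply mul_le_mul_right
      apply pow_le_pow_right_of_le_one' (ENNReal.ofReal_le_one.2 hρ1.le)
      omega
    rw [ENNReal.tsum_geometric] at hb
    apply ne_top_of_le_ne_top _ hb
    apply ENNReal.mul_ne_top ENNReal.ofReal_ne_top
    rw [ENNReal.inv_ne_top]
    have : ENNReal.ofReal ρ < 1 := ENNReal.ofReal_lt_one.2 hρ1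
    exact (tsub_pos_iff_lt.2 this).ne'
  have hfin := ae_finite_setOf_mem htsum
  have haeq : ∀ᵐ ω ∂(ℙ : Measure Ω), ∀ p : ℚ, B ω (p:ℝ) = k (p:ℝ) ω :=
    ae_all_iff.2 (fun p => hkae (p:ℝ))
  filter_upwards [hcont, hzero, hfin, haeq] with ω hcω h0ω hfinω haω
  obtain ⟨M, hM⟩ := hfinω.bddAbove
  -- key estimate at rational points
  have key : ∀ p : ℚ, (M:ℝ) + 2 ≤ (p:ℝ) → B ω (-(p:ℝ)) + a * (-(p:ℝ)) < 0 := by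
    intro p hp
    have hp0 : (0:ℝ) ≤ (p:ℝ) := by
      have : (0:ℝ) ≤ (M:ℝ) := Nat.cast_nonneg M
      linarith
    set n : ℕ := ⌊(p:ℝ)⌋₊ with hn
    have hq1 : (n:ℝ) ≤ (p:ℝ) := Nat.floor_le hp0
    have hq2 : (p:ℝ) < (n:ℝ)+1 := Nat.lt_floor_add_one _
    have hnM : M + 2 ≤ n := by
      apply Nat.le_floor
      push_cast
      linarith
    have hnotin : ω ∉ SB (n-1) := by
      intro hmem
      have : n - 1 ≤ M := hM hmem
      omega
    have hn1 : n - 1 + 1 = n := by omega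
    have hnotin2 : ω ∉ s1 n ∪ s2 n := by rw [← hn1]; exact hnotin
    replace hnotin := hnotin2
    have hnot1 : ¬ (a*n/2 ≤ φ (n:ℝ) ω - φ 0 ω) := fun h => hnotin (Or.inl h)
    have hnot2 : ¬ (∃ q ∈ QQ n, a*n/2 ≤ φ q ω - φ (n:ℝ) ω) := fun h => hnotin (Or.inr h)
    push_neg at hnot1 hnot2
    have hqmem : (p:ℝ) ∈ QQ n := ⟨⟨p, rfl⟩, ⟨hq1, by linarith⟩⟩
    have h2 := hnot2 (p:ℝ) hqmem
    have hsum : φ (p:ℝ) ω - φ 0 ω < a*n := by linarith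
    -- convert to B
    have e1 : φ (p:ℝ) ω = B ω (-(p:ℝ)) := by
      have := haω (-p)
      push_cast at this
      rw [hφdef]
      simp only
      rw [← this]
    have e2 : φ 0 ω = 0 := by
      have := haω 0
      push_cast at this
      rw [hφdef]
      simp only [neg_zero]
      rw [← this, h0ω]
    rw [e1, e2, sub_zero] at hsum
    have han : a * n ≤ a * p := by
      apply mul_le_mul_of_nonneg_left hq1 ha.le
    nlinarith
  -- closed set argument
  set Z : Set ℝ := {z : ℝ | B ω z + a * z ≤ 0} with hZ
  have hfcont : Continuous (fun z => B ω z + a * z) :=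
    hcω.add (continuous_const.mul continuous_id)
  have hZclosed : IsClosed Z := isClosed_le hfcont continuous_const
  set R : ℝ := (M:ℝ) + 2 with hR
  have hZrat : ∀ p : ℚ, (p:ℝ) ≤ -R → (p:ℝ) ∈ Z := by
    intro p hpR
    have := key (-p) (by push_cast; linarith)
    push_cast at this
    rw [hZ]
    simp only [Set.mem_setOf_eq]
    rw [show -(-(p:ℝ)) = (p:ℝ) by ring] at this
    linarith
  have hIio : Iio (-R) ⊆ Z := by
    intro z hz
    have hd : Dense (Set.range ((↑) : ℚ → ℝ)) := Rat.denseRange_cast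
    have h1 : z ∈ closure (Iio (-R) ∩ Set.range ((↑) : ℚ → ℝ)) :=
      hd.open_subset_closure_inter isOpen_Iio hz
    have h2 : Iio (-R) ∩ Set.range ((↑) : ℚ → ℝ) ⊆ Z := by
      rintro _ ⟨hlt, ⟨p, rfl⟩⟩
      exact hZrat p (le_of_lt hlt)
    have := closure_mono h2 h1
    rwa [hZclosed.closure_eq] at this
  have hIic : Iic (-R) ⊆ Z := by
    intro z hz
    have hz' : z ≤ -R := hz
    rcases hz'.lt_or_eq with h | h
    · exact hIio h
    · rw [h]
      have h1 : -R ∈ closure (Iio (-R)) := by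
        rw [closure_Iio]
        exact Set.self_mem_Iic
      have := closure_mono hIio h1
      rwa [hZclosed.closure_eq] at this
  -- conclude BddAbove
  have hsplit : Iic (0:ℝ) = Iic (-R) ∪ Icc (-R) 0 := by
    rw [Set.Iic_union_Icc_eq_Iic (by linarith : -R ≤ 0)]
  rw [hsplit, Set.image_union]
  apply BddAbove.union
  · refine ⟨0, ?_⟩
    rintro _ ⟨z, hz, rfl⟩
    exact hIic hz
  · exact ((isCompact_Icc).image hfcont).bddAbove

/-- for a two-sided standard Brownian motion `B` and `a > 0`, there are
constants `c, b > 0` such that for all `y ≥ 1`,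
`P(sup_{0 ≤ z ≤ y} (B(z) + a z) ≤ sup_{z ≤ 0} (B(z) + a z)) ≥ c e^{-b y}`. -/
theorem sup_comparison_lower_bound {Ω : Type*} [MeasureSpace Ω]
    [IsProbabilityMeasure (ℙ : Measure Ω)]
    (B : Ω → ℝ → ℝ) (hB : IsTwoSidedStdBM B) (a : ℝ) (ha : 0 < a) :
    ∃ c > (0 : ℝ), ∃ b > (0 : ℝ), ∀ y : ℝ, 1 ≤ y →
      ENNReal.ofReal (c * Real.exp (-b * y)) ≤
        ℙ {ω | sSup ((fun z => B ω z + a * z) '' Set.Icc 0 y)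
                ≤ sSup ((fun z => B ω z + a * z) '' Set.Iic 0)} := by
  obtain ⟨hcont, hzero, hpos, hneg, hhalves⟩ := hB
  -- measurable modification
  have haem : ∀ t : ℝ, AEMeasurable (fun ω => B ω t) (ℙ : Measure Ω) := by
    intro t
    rcases le_or_gt 0 t with h | h
    · have hmap := hpos.1 0 t le_rfl h
      have haem0 : AEMeasurable (fun ω => B ω t - B ω 0) (ℙ : Measure Ω) := by
        by_contra hc
        rw [Measure.map_of_not_aemeasurable hc] at hmap
        have h1 := congrArg (fun μ : Measure ℝ => μ Set.univ) hmap
        simp at h1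
      apply haem0.congr
      filter_upwards [hzero] with ω h0
      simp [h0]
    · have hmap := hneg.1 0 (-t) le_rfl (by linarith)
      simp only [neg_neg, neg_zero] at hmap
      have haem0 : AEMeasurable (fun ω => B ω t - B ω 0) (ℙ : Measure Ω) := by
        by_contra hc
        rw [Measure.map_of_not_aemeasurable hc] at hmap
        have h1 := congrArg (fun μ : Measure ℝ => μ Set.univ) hmap
        simp at h1
      apply haem0.congr
      filter_upwards [hzero] with ω h0
      simp [h0]
  set k : ℝ → Ω → ℝ := fun t => AEMeasurable.mk _ (haem t) with hk
  have hkmeas : ∀ t, Measurable (k t) := fun t => (haem t).measurable_mk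
  have hkae : ∀ t, (fun ω => B ω t) =ᵐ[(ℙ : Measure Ω)] k t := fun t => (haem t).ae_eq_mk
  have hpos' : HasStdBMIncrements (fun ω t => k t ω) := hasStdBM_congr hkae hpos
  have hneg' : HasStdBMIncrements (fun ω t => k (-t) ω) :=
    hasStdBM_congr (fun t => hkae (-t)) hneg
  have hbdd := bddAbove_ae B k hkmeas hkae hneg' hcont hzero ha
  set c1 : ℝ := (Real.sqrt (2*π))⁻¹ * Real.exp (-1/2) with hc1
  set c2 : ℝ := (Real.sqrt (2*π))⁻¹ with hc2
  set b2 : ℝ := 1 + (2*a+2)^2/2 with hb2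
  have hc1pos : 0 < c1 := by rw [hc1]; positivity
  have hc2pos : 0 < c2 := by rw [hc2]; positivity
  have hb2pos : 0 < b2 := by rw [hb2]; positivity
  refine ⟨c1 * c2, by positivity, 1 + b2, by positivity, ?_⟩
  intro y hy
  have hy0 : (0:ℝ) ≤ y := by linarith
  -- events
  set A' : Set Ω := {ω | ∀ q : ℚ, (q:ℝ) ∈ Icc (0:ℝ) y → B ω (q:ℝ) ≤ 1} with hA'
  set D' : Set Ω := {ω | 2*a*y + 1 ≤ B ω (-y)} with hD'
  set GG : Set Ω := ({ω | Continuous (B ω)} ∩ {ω | B ω 0 = 0})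
      ∩ {ω | BddAbove ((fun z => B ω z + a * z) '' Iic 0)} with hGG
  have hGGnull : ℙ GGᶜ = 0 := by
    rw [hGG, Set.compl_inter, Set.compl_inter]
    apply measure_union_null
    apply measure_union_null
    · have := ae_iff.1 hcont
      rw [show {ω | Continuous (B ω)}ᶜ = {ω | ¬ Continuous (B ω)} from by ext; simp]
      exact this
    · have := ae_iff.1 hzero
      rw [show {ω | B ω 0 = 0}ᶜ = {ω | ¬ (B ω 0 = 0)} from by ext; simp]
      exact this
    · have := ae_iff.1 hbdd
      rw [show {ω | BddAbove ((fun z => B ω z + a * z) '' Iic 0)}ᶜ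
          = {ω | ¬ BddAbove ((fun z => B ω z + a * z) '' Iic 0)} from by ext; simp]
      exact this
  -- inclusion
  have hincl : (A' ∩ D') ∩ GG ⊆ {ω | sSup ((fun z => B ω z + a * z) '' Set.Icc 0 y)
                ≤ sSup ((fun z => B ω z + a * z) '' Set.Iic 0)} := by
    rintro ω ⟨⟨hA, hD⟩, ⟨⟨hcω, h0ω⟩, hbddω⟩⟩
    simp only [hA', hD', Set.mem_setOf_eq] at hA hD hcω h0ω hbddω ⊢
    have hball : ∀ z ∈ Icc (0:ℝ) y, B ω z ≤ 1 := by
      have hZ1 : IsClosed {z : ℝ | B ω z ≤ 1} := isClosed_le hcω continuous_const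
      have hsub : Ioo (0:ℝ) y ⊆ {z : ℝ | B ω z ≤ 1} := by
        intro z hz
        have hd : Dense (Set.range ((↑) : ℚ → ℝ)) := Rat.denseRange_cast
        have h1 : z ∈ closure (Ioo (0:ℝ) y ∩ Set.range ((↑) : ℚ → ℝ)) :=
          hd.open_subset_closure_inter isOpen_Ioo hz
        have h2 : Ioo (0:ℝ) y ∩ Set.range ((↑) : ℚ → ℝ) ⊆ {z : ℝ | B ω z ≤ 1} := by
          rintro _ ⟨hmem, ⟨p, rfl⟩⟩
          exact hA p ⟨hmem.1.le, hmem.2.le⟩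
        have := closure_mono h2 h1
        rwa [hZ1.closure_eq] at this
      intro z hz
      have h2 : Icc (0:ℝ) y = closure (Ioo 0 y) :=
        (closure_Ioo (by linarith : (0:ℝ) ≠ y)).symm
      have h3 : z ∈ closure (Ioo (0:ℝ) y) := h2 ▸ hz
      have := closure_mono hsub h3
      rwa [hZ1.closure_eq] at this
    have hsupP : sSup ((fun z => B ω z + a * z) '' Icc 0 y) ≤ 1 + a * y := by
      apply Real.sSup_le
      · rintro _ ⟨z, hz, rfl⟩
        have h1 := hball z hz
        have h2 : a * z ≤ a * y := mul_le_mul_of_nonneg_left hz.2 ha.le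
        simp only
        linarith
      · nlinarith
    have hsupN : a * y + 1 ≤ sSup ((fun z => B ω z + a * z) '' Iic 0) := by
      have hmem : B ω (-y) + a * (-y) ∈ (fun z => B ω z + a * z) '' Iic 0 :=
        ⟨-y, by simp only [Set.mem_Iic]; linarith, rfl⟩
      have h4 := le_csSup hbddω hmem
      nlinarith
    linarith
  -- independence
  set SA : Set ({t : ℝ // 0 ≤ t} → ℝ) :=
    {f | ∀ q : ℚ, ∀ h : (q:ℝ) ∈ Icc (0:ℝ) y, f ⟨(q:ℝ), h.1⟩ ≤ 1} with hSA
  have hSAm : MeasurableSet SA := by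
    have : SA = ⋂ (q : ℚ), ⋂ (h : (q:ℝ) ∈ Icc (0:ℝ) y), {f : {t : ℝ // 0 ≤ t} → ℝ |
        f ⟨(q:ℝ), h.1⟩ ≤ 1} := by
      ext f
      simp only [hSA, Set.mem_setOf_eq, Set.mem_iInter]
    rw [this]
    exact MeasurableSet.iInter (fun q => MeasurableSet.iInter
      (fun h => measurableSet_le (measurable_pi_apply _) measurable_const))
  set SD : Set ({t : ℝ // 0 ≤ t} → ℝ) := {f | 2*a*y + 1 ≤ f ⟨y, hy0⟩} with hSD
  have hSDm : MeasurableSet SD :=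
    measurableSet_le measurable_const (measurable_pi_apply _)
  have hApre : A' = (fun ω => (fun t : {t : ℝ // 0 ≤ t} => B ω t)) ⁻¹' SA := by
    ext ω
    constructor
    · intro hω q h
      exact hω q h
    · intro hω q h
      exact hω q h
  have hDpre : D' = (fun ω => (fun t : {t : ℝ // 0 ≤ t} => B ω (-(t:ℝ)))) ⁻¹' SD := by
    ext ω
    simp only [hD', hSD, Set.mem_setOf_eq, Set.mem_preimage]
  have hprod : ℙ (A' ∩ D') = ℙ A' * ℙ D' := by
    rw [hApre, hDpre]
    exact hhalves.measure_inter_preimage_eq_mul SA SD hSAm hSDm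
  -- variance
  set v : ℝ≥0 := (y - 0).toNNReal with hv
  have hvco : (v : ℝ) = y := by
    rw [hv, Real.coe_toNNReal _ (by linarith)]
    ring
  have hvne : v ≠ 0 := by
    intro h
    rw [h] at hvco
    simp at hvco
    linarith
  -- bound on D'
  set Dk : Set Ω := {ω | 2*a*y+1 ≤ k (-y) ω - k (-0) ω} with hDk
  have hDcong : ℙ D' = ℙ Dk := by
    apply measure_congr
    filter_upwards [hkae (-y), hkae 0, hzero] with ω h1 h2 h3
    show (ω ∈ D') = (ω ∈ Dk)
    simp only [hD', hDk, Set.mem_setOf_eq, neg_zero, eq_iff_iff]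
    rw [← h1, ← h2, h3, sub_zero]
  have hDlaw : ℙ Dk = gaussianReal 0 v (Ici (2*a*y+1)) := by
    have hlaw : Measure.map (fun ω => k (-y) ω - k (-0) ω) (ℙ : Measure Ω)
        = gaussianReal 0 (y - 0).toNNReal := hneg'.1 0 y le_rfl hy0
    have hDkpre : Dk = (fun ω => k (-y) ω - k (-0) ω) ⁻¹' (Ici (2*a*y+1)) := rfl
    rw [hDkpre, ← Measure.map_apply (show Measurable (fun ω => k (-y) ω - k (-0) ω) from (hkmeas _).sub (hkmeas _)) measurableSet_Ici, hlaw, hv]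
  have hDlb : ENNReal.ofReal (c2 * Real.exp (-b2 * y)) ≤ ℙ D' := by
    rw [hDcong, hDlaw]
    refine le_trans ?_ (gauss_tail_lb hvne (by positivity : (0:ℝ) ≤ 2*a*y+1))
    apply ENNReal.ofReal_le_ofReal
    rw [hvco, hc2, hb2]
    exact real_bound_2 hy ha
  -- bound on A'
  set Ak : Set Ω := {ω | ∀ q : ℚ, (q:ℝ) ∈ Icc (0:ℝ) y → k (q:ℝ) ω - k 0 ω ≤ 1} with hAk
  have hae2 : ∀ᵐ ω ∂(ℙ : Measure Ω), ∀ q : ℚ, B ω (q:ℝ) = k (q:ℝ) ω :=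
    ae_all_iff.2 (fun q => hkae (q:ℝ))
  have hAcong : ℙ A' = ℙ Ak := by
    apply measure_congr
    filter_upwards [hae2, hkae 0, hzero] with ω h1 h2 h3
    show (ω ∈ A') = (ω ∈ Ak)
    simp only [hA', hAk, Set.mem_setOf_eq, eq_iff_iff]
    constructor
    · intro H q hq
      rw [← h1 q, ← h2, h3, sub_zero]
      exact H q hq
    · intro H q hq
      have := H q hq
      rwa [← h1 q, ← h2, h3, sub_zero] at this
  have hAkm : MeasurableSet Ak := by
    have : Ak = ⋂ (q : ℚ), ⋂ (_ : (q:ℝ) ∈ Icc (0:ℝ) y), {ω | k (q:ℝ) ω - k 0 ω ≤ 1} := by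
      ext ω
      simp only [hAk, Set.mem_setOf_eq, Set.mem_iInter]
    rw [this]
    exact MeasurableSet.iInter (fun q => MeasurableSet.iInter
      (fun _ => measurableSet_le (((hkmeas _).sub (hkmeas _))) measurable_const))
  have hAkc : ℙ Akᶜ ≤ 2 * gaussianReal 0 v (Ici (1:ℝ)) := by
    set Qpos : Set ℝ := {r : ℝ | (∃ p : ℚ, (p:ℝ) = r) ∧ r ∈ Icc (0:ℝ) y} with hQpos
    have hQc : Qpos.Countable :=
      Set.Countable.mono (fun r hr => hr.1) (Set.countable_range ((↑) : ℚ → ℝ))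
    have hQsub : Qpos ⊆ Icc (0:ℝ) y := fun r hr => hr.2
    have hcmb := countable_max_bound (fun t => k t) hpos' hkmeas le_rfl hy0 one_pos hQc hQsub
    rw [hv]
    refine le_trans (measure_mono ?_) hcmb
    intro ω hω
    simp only [hAk, Set.mem_compl_iff, Set.mem_setOf_eq] at hω
    push_neg at hω
    obtain ⟨q, hq, hq1⟩ := hω
    exact ⟨(q:ℝ), ⟨⟨q, rfl⟩, hq⟩, hq1.le⟩
  have hsplitIci : gaussianReal 0 v (Ici (1:ℝ)) + gaussianReal 0 v (Ico (0:ℝ) 1) = 2⁻¹ := by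
    rw [← gauss_Ici_zero hvne]
    have hunion : Ico (0:ℝ) 1 ∪ Ici (1:ℝ) = Ici (0:ℝ) :=
      Set.Ico_union_Ici_eq_Ici (by norm_num)
    have hdisj : Disjoint (Ico (0:ℝ) 1) (Ici (1:ℝ)) := by
      rw [Set.disjoint_left]
      rintro x hx hx'
      exact absurd hx.2 (not_lt.2 hx')
    rw [← hunion, measure_union hdisj measurableSet_Ici, add_comm]
  have hAlb : ENNReal.ofReal (c1 * Real.exp (-1 * y)) ≤ ℙ A' := by
    rw [hAcong]
    have h1 : ℙ Ak = 1 - ℙ Akᶜ := by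
      calc ℙ Ak = ℙ Akᶜᶜ := by rw [compl_compl]
        _ = 1 - ℙ Akᶜ := prob_compl_eq_one_sub hAkm.compl
    rw [h1]
    have h2 : ℙ Akᶜ + 2 * gaussianReal 0 v (Ico (0:ℝ) 1) ≤ 1 := by
      calc ℙ Akᶜ + 2 * gaussianReal 0 v (Ico (0:ℝ) 1)
          ≤ 2 * gaussianReal 0 v (Ici (1:ℝ)) + 2 * gaussianReal 0 v (Ico (0:ℝ) 1) :=
            add_le_add hAkc le_rfl
        _ = 2 * (gaussianReal 0 v (Ici (1:ℝ)) + gaussianReal 0 v (Ico (0:ℝ) 1)) := by ring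
        _ = 2 * 2⁻¹ := by rw [hsplitIci]
        _ = 1 := ENNReal.mul_inv_cancel two_ne_zero ENNReal.ofNat_ne_top
    have h3 : 2 * gaussianReal 0 v (Ico (0:ℝ) 1) ≤ 1 - ℙ Akᶜ := ENNReal.le_sub_of_add_le_left (measure_ne_top _ _) h2
    refine le_trans ?_ h3
    have h4 := gauss_interval_lb hvne (le_refl (0:ℝ))
    calc ENNReal.ofReal (c1 * Real.exp (-1 * y))
        ≤ ENNReal.ofReal ((Real.sqrt (2*π*v))⁻¹ * Real.exp (-((0:ℝ)+1)^2 / (2*v))) := by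
          apply ENNReal.ofReal_le_ofReal
          rw [hvco, hc1]
          exact real_bound_1 hy
      _ ≤ gaussianReal 0 v (Ico (0:ℝ) (0+1)) := h4
      _ = gaussianReal 0 v (Ico (0:ℝ) 1) := by norm_num
      _ ≤ 2 * gaussianReal 0 v (Ico (0:ℝ) 1) :=
          le_mul_of_one_le_left zero_le one_le_two
  -- combine
  calc ENNReal.ofReal (c1 * c2 * Real.exp (-(1 + b2) * y))
      = ENNReal.ofReal ((c1 * Real.exp (-1*y)) * (c2 * Real.exp (-b2*y))) := by
        congr 1
        rw [show -(1 + b2) * y = (-1*y) + (-b2*y) by ring, Real.exp_add]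
        ring
    _ = ENNReal.ofReal (c1 * Real.exp (-1*y)) * ENNReal.ofReal (c2 * Real.exp (-b2*y)) :=
        ENNReal.ofReal_mul (by positivity)
    _ ≤ ℙ A' * ℙ D' := mul_le_mul' hAlb hDlb
    _ = ℙ (A' ∩ D') := hprod.symm
    _ = ℙ ((A' ∩ D') ∩ GG) := (measure_inter_conull hGGnull).symm
    _ ≤ ℙ {ω | sSup ((fun z => B ω z + a * z) '' Set.Icc 0 y)
                ≤ sSup ((fun z => B ω z + a * z) '' Set.Iic 0)} := measure_mono hincl
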